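/- Let H₁, H₂ be Hopf algebras and M an (α₁,β₁,γ₁,δ₁)-, N an (α₂,β₂,γ₂,δ₂)-, P an (α₃,β₃,γ₃,δ₃)-Yetter-Drinfeld-Long bimodule. Then the braidings satisfy the hexagon-type identity c_{M⊗N,P} = (c_{M, ᴺP} ⊗ id_N) ∘ (id_M ⊗ c_{N,P}), where c_{X,Y}(x⊗y) = β_X⁻¹(x₍₋₁₎) ▷ y₍₀₎ ⊗ x₍₀₎ ◁ δ_X⁻¹(y₍₁₎), with (α_X, β_X, γ_X, δ_X) the parameters of X, and the tensor product M ⊗ N carries parameters (α₂α₁, α₂β₁α₂⁻¹β₂, γ₁γ₂, δ₂γ₂⁻¹δ₁γ₂) with structures as in the T-category construction. -/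

import Mathlib

set_option maxHeartbeats 2000000
set_option synthInstance.maxHeartbeats 1000000


open TensorProduct

/-- The structure maps of an `H₁`-`H₂`-bimodule-bicomodule: left `H₁`-action,
right `H₂`-action, left `H₁`-coaction and right `H₂`-coaction. -/
structure YDLStruct (k H₁ H₂ M : Type*) [Field k] [Ring H₁] [Ring H₂]
    [HopfAlgebra k H₁] [HopfAlgebra k H₂] [AddCommGroup M] [Module k M] where
  actL : H₁ ⊗[k] M →ₗ[k] M
  actR : M ⊗[k] H₂ →ₗ[k] M
  coL : M →ₗ[k] H₁ ⊗[k] M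
  coR : M →ₗ[k] M ⊗[k] H₂

variable {k H₁ H₂ : Type*} [Field k] [Ring H₁] [Ring H₂]
  [HopfAlgebra k H₁] [HopfAlgebra k H₂]

/-- `(h ⊗ m) ⊗ h' ↦ (h * h') ⊗ m`. -/
noncomputable def rmulL (k H M : Type*) [Field k] [Ring H] [HopfAlgebra k H]
    [AddCommGroup M] [Module k M] : (H ⊗[k] M) ⊗[k] H →ₗ[k] H ⊗[k] M :=
  TensorProduct.map (LinearMap.mul' k H) LinearMap.id ∘ₗ
    (TensorProduct.assoc k H H M).symm.toLinearMap ∘ₗ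
    TensorProduct.map LinearMap.id (TensorProduct.comm k M H).toLinearMap ∘ₗ
    (TensorProduct.assoc k H M H).toLinearMap

/-- `h ⊗ (m ⊗ h') ↦ m ⊗ (h * h')`. -/
noncomputable def lmulR (k H M : Type*) [Field k] [Ring H] [HopfAlgebra k H]
    [AddCommGroup M] [Module k M] : H ⊗[k] (M ⊗[k] H) →ₗ[k] M ⊗[k] H :=
  TensorProduct.map LinearMap.id (LinearMap.mul' k H) ∘ₗ
    (TensorProduct.assoc k M H H).toLinearMap ∘ₗ
    TensorProduct.map (TensorProduct.comm k H M).toLinearMap LinearMap.id ∘ₗ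
    (TensorProduct.assoc k H M H).symm.toLinearMap

/-- `M` with structure maps `S` is an `(α, β, γ, δ)`-Yetter-Drinfeld-Long bimodule:
it is an `H₁`-`H₂`-bimodule and `H₁`-`H₂`-bicomodule satisfying the four compatibility
conditions (2.1)–(2.4) (in Sweedler notation:
(2.1) `α(h₁)m₍₋₁₎ ⊗ h₂ ▷ m₍₀₎ = (h₁ ▷ m)₍₋₁₎ β(h₂) ⊗ (h₁ ▷ m)₍₀₎`;
(2.2) `(h ▷ m)₍₀₎ ⊗ (h ▷ m)₍₁₎ = h ▷ m₍₀₎ ⊗ m₍₁₎`;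
(2.3) `m₍₀₎ ◁ h₁ ⊗ m₍₁₎ δ(h₂) = (m ◁ h₂)₍₀₎ ⊗ γ(h₁)(m ◁ h₂)₍₁₎`;
(2.4) `(m ◁ h)₍₋₁₎ ⊗ (m ◁ h)₍₀₎ = m₍₋₁₎ ⊗ m₍₀₎ ◁ h`). -/
structure IsYDL (al be : H₁ →ₗ[k] H₁) (ga de : H₂ →ₗ[k] H₂)
    {M : Type*} [AddCommGroup M] [Module k M] (S : YDLStruct k H₁ H₂ M) : Prop where
  actL_one : ∀ m : M, S.actL (1 ⊗ₜ[k] m) = m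
  actL_mul : ∀ (h h' : H₁) (m : M),
    S.actL ((h * h') ⊗ₜ[k] m) = S.actL (h ⊗ₜ[k] S.actL (h' ⊗ₜ[k] m))
  actR_one : ∀ m : M, S.actR (m ⊗ₜ[k] 1) = m
  actR_mul : ∀ (m : M) (h h' : H₂),
    S.actR (S.actR (m ⊗ₜ[k] h) ⊗ₜ[k] h') = S.actR (m ⊗ₜ[k] (h * h'))
  act_bimod : ∀ (h : H₁) (m : M) (h'' : H₂),
    S.actR (S.actL (h ⊗ₜ[k] m) ⊗ₜ[k] h'') = S.actL (h ⊗ₜ[k] S.actR (m ⊗ₜ[k] h''))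
  coL_counit : ∀ m : M,
    TensorProduct.lid k M (TensorProduct.map Coalgebra.counit LinearMap.id (S.coL m)) = m
  coL_coassoc : ∀ m : M,
    TensorProduct.map Coalgebra.comul LinearMap.id (S.coL m) =
      (TensorProduct.assoc k H₁ H₁ M).symm
        (TensorProduct.map LinearMap.id S.coL (S.coL m))
  coR_counit : ∀ m : M,
    TensorProduct.rid k M (TensorProduct.map LinearMap.id Coalgebra.counit (S.coR m)) = m
  coR_coassoc : ∀ m : M,
    TensorProduct.map LinearMap.id Coalgebra.comul (S.coR m) =
      TensorProduct.assoc k M H₂ H₂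
        (TensorProduct.map S.coR LinearMap.id (S.coR m))
  co_bicomod : ∀ m : M,
    TensorProduct.map LinearMap.id S.coR (S.coL m) =
      TensorProduct.assoc k H₁ M H₂
        (TensorProduct.map S.coL LinearMap.id (S.coR m))
  ydL : ∀ (h : H₁) (m : M),
    TensorProduct.map (LinearMap.mul' k H₁ ∘ₗ TensorProduct.map al LinearMap.id) S.actL
      (TensorProduct.tensorTensorTensorComm k H₁ H₁ H₁ M
        (Coalgebra.comul (R := k) h ⊗ₜ[k] S.coL m)) =
    rmulL k H₁ M
      (TensorProduct.map (S.coL ∘ₗ S.actL ∘ₗ (TensorProduct.mk k H₁ M).flip m) be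
        (Coalgebra.comul (R := k) h))
  longL : ∀ (h : H₁) (m : M),
    S.coR (S.actL (h ⊗ₜ[k] m)) =
      TensorProduct.map (S.actL ∘ₗ TensorProduct.mk k H₁ M h) LinearMap.id (S.coR m)
  ydR : ∀ (m : M) (h : H₂),
    TensorProduct.map S.actR (LinearMap.mul' k H₂ ∘ₗ TensorProduct.map LinearMap.id de)
      (TensorProduct.tensorTensorTensorComm k M H₂ H₂ H₂
        (S.coR m ⊗ₜ[k] Coalgebra.comul (R := k) h)) =
    lmulR k H₂ M
      (TensorProduct.map ga (S.coR ∘ₗ S.actR ∘ₗ TensorProduct.mk k M H₂ m)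
        (Coalgebra.comul (R := k) h))
  longR : ∀ (m : M) (h : H₂),
    S.coL (S.actR (m ⊗ₜ[k] h)) =
      TensorProduct.map LinearMap.id (S.actR ∘ₗ (TensorProduct.mk k M H₂).flip h)
        (S.coL m)

/-- The braiding `c_{M,N}(m ⊗ n) = β₁⁻¹(m₍₋₁₎) ▷ n₍₀₎ ⊗ m₍₀₎ ◁ δ₁⁻¹(n₍₁₎)`, where
`bInv` and `dInv` are the maps `β₁⁻¹` and `δ₁⁻¹`. -/
noncomputable def braid {M N : Type*} [AddCommGroup M] [Module k M]
    [AddCommGroup N] [Module k N]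
    (bInv : H₁ →ₗ[k] H₁) (dInv : H₂ →ₗ[k] H₂)
    (SM : YDLStruct k H₁ H₂ M) (SN : YDLStruct k H₁ H₂ N) :
    M ⊗[k] N →ₗ[k] N ⊗[k] M :=
  TensorProduct.map (SN.actL ∘ₗ TensorProduct.map bInv LinearMap.id)
      (SM.actR ∘ₗ TensorProduct.map LinearMap.id dInv) ∘ₗ
    (TensorProduct.tensorTensorTensorComm k H₁ M N H₂).toLinearMap ∘ₗ
    TensorProduct.map SM.coL SN.coR

/-- The tensor product structure maps on `M ⊗ N`: here `u = α₂`, `v = α₂β₁α₂⁻¹`,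
`w = γ₂`, `x = γ₂⁻¹δ₁γ₂`, so that
`h ▷ (m⊗n) = h₁▷m ⊗ h₂▷n`, `(m⊗n)₍₋₁₎ ⊗ (m⊗n)₍₀₎ = u(m₍₋₁₎)v(n₍₋₁₎) ⊗ m₍₀₎⊗n₍₀₎`,
`(m⊗n)◁h = m◁w(h₁) ⊗ n◁x(h₂)`, `(m⊗n)₍₀₎ ⊗ (m⊗n)₍₁₎ = m₍₀₎⊗n₍₀₎ ⊗ m₍₁₎n₍₁₎`. -/
noncomputable def tensorYDL {M N : Type*} [AddCommGroup M] [Module k M]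
    [AddCommGroup N] [Module k N]
    (u v : H₁ →ₗ[k] H₁) (w x : H₂ →ₗ[k] H₂)
    (SM : YDLStruct k H₁ H₂ M) (SN : YDLStruct k H₁ H₂ N) :
    YDLStruct k H₁ H₂ (M ⊗[k] N) where
  actL := TensorProduct.map SM.actL SN.actL ∘ₗ
    (TensorProduct.tensorTensorTensorComm k H₁ H₁ M N).toLinearMap ∘ₗ
    TensorProduct.map Coalgebra.comul LinearMap.id
  actR := TensorProduct.map SM.actR SN.actR ∘ₗ
    (TensorProduct.tensorTensorTensorComm k M N H₂ H₂).toLinearMap ∘ₗ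
    TensorProduct.map LinearMap.id
      (TensorProduct.map w x ∘ₗ (Coalgebra.comul : H₂ →ₗ[k] H₂ ⊗[k] H₂))
  coL := TensorProduct.map (LinearMap.mul' k H₁ ∘ₗ TensorProduct.map u v) LinearMap.id ∘ₗ
    (TensorProduct.tensorTensorTensorComm k H₁ M H₁ N).toLinearMap ∘ₗ
    TensorProduct.map SM.coL SN.coL
  coR := TensorProduct.map LinearMap.id (LinearMap.mul' k H₂) ∘ₗ
    (TensorProduct.tensorTensorTensorComm k M H₂ N H₂).toLinearMap ∘ₗ
    TensorProduct.map SM.coR SN.coR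

/-- The twisted structure on `N`: `u = β₁⁻¹α₁`, `v = α₁⁻¹α₂β₁α₂⁻¹`,
`w = γ₂⁻¹δ₁γ₂γ₁⁻¹`, `x = γ₁δ₁⁻¹`, so that `h ⇀ n = u(h) ▷ n`,
`n ↦ v(n₍₋₁₎) ⊗ n₍₀₎`, `n ↼ h = n ◁ w(h)`, `n ↦ n₍₀₎ ⊗ x(n₍₁₎)`. -/
noncomputable def twistYDL {N : Type*} [AddCommGroup N] [Module k N]
    (u v : H₁ →ₗ[k] H₁) (w x : H₂ →ₗ[k] H₂) (SN : YDLStruct k H₁ H₂ N) :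
    YDLStruct k H₁ H₂ N where
  actL := SN.actL ∘ₗ TensorProduct.map u LinearMap.id
  actR := SN.actR ∘ₗ TensorProduct.map LinearMap.id w
  coL := TensorProduct.map v LinearMap.id ∘ₗ SN.coL
  coR := TensorProduct.map LinearMap.id x ∘ₗ SN.coR


section helpers
theorem bsymm {k H : Type*} [Field k] [Ring H] [HopfAlgebra k H]
    (f : H ≃ₐc[k] H) (x : H) : f.symm (f x) = x := f.toCoalgEquiv.symm_apply_apply x

theorem bapp {k H : Type*} [Field k] [Ring H] [HopfAlgebra k H]
    (f : H ≃ₐc[k] H) (x : H) : f (f.symm x) = x := f.toCoalgEquiv.apply_symm_apply x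

theorem tlm {k H : Type*} [Field k] [Ring H] [HopfAlgebra k H]
    (f : H ≃ₐc[k] H) (x : H) : f.toLinearMap x = f x := rfl

theorem comul_tlm {k H : Type*} [Field k] [Ring H] [HopfAlgebra k H]
    (f : H ≃ₐc[k] H) (x : H) :
    Coalgebra.comul (R := k) (f.toLinearMap x) =
      TensorProduct.map f.toLinearMap f.toLinearMap (Coalgebra.comul x) := by
  rw [tlm, ← CoalgHomClass.map_comp_comul_apply f x]; rfl

variable {M N P : Type*} [AddCommGroup M] [Module k M] [AddCommGroup N] [Module k N]
  [AddCommGroup P] [Module k P]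

theorem e1gen (A : H₁ ⊗[k] P →ₗ[k] P) (aM : M ⊗[k] H₂ →ₗ[k] M) (aN : N ⊗[k] H₂ →ₗ[k] N)
    (wL xL dI : H₂ →ₗ[k] H₂)
    (hdI : ∀ c : H₂, Coalgebra.comul (R := k) (dI c) =
      TensorProduct.map dI dI (Coalgebra.comul (R := k) c)) :
    TensorProduct.map A
        ((TensorProduct.map aM aN ∘ₗ
          (TensorProduct.tensorTensorTensorComm k M N H₂ H₂).toLinearMap ∘ₗ
          TensorProduct.map LinearMap.id
            (TensorProduct.map wL xL ∘ₗ (Coalgebra.comul : H₂ →ₗ[k] H₂ ⊗[k] H₂))) ∘ₗ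
          TensorProduct.map LinearMap.id dI) ∘ₗ
      (TensorProduct.tensorTensorTensorComm k H₁ (M ⊗[k] N) P H₂).toLinearMap =
    TensorProduct.map A
        (TensorProduct.map aM aN ∘ₗ
          (TensorProduct.tensorTensorTensorComm k M N H₂ H₂).toLinearMap ∘ₗ
          TensorProduct.map LinearMap.id (TensorProduct.map (wL ∘ₗ dI) (xL ∘ₗ dI))) ∘ₗ
      (TensorProduct.tensorTensorTensorComm k H₁ (M ⊗[k] N) P (H₂ ⊗[k] H₂)).toLinearMap ∘ₗ
      TensorProduct.map LinearMap.id
        (TensorProduct.map LinearMap.id (Coalgebra.comul : H₂ →ₗ[k] H₂ ⊗[k] H₂)) := by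
  ext h m9 n9 p c
  simp only [LinearMap.coe_comp, Function.comp_apply, TensorProduct.map_tmul,
    LinearMap.id_coe, id_eq, LinearEquiv.coe_coe, TensorProduct.tensorTensorTensorComm_tmul,
    LinearMap.compr₂_apply, TensorProduct.mk_apply,
    TensorProduct.AlgebraTensorModule.curry_apply, TensorProduct.curry_apply,
    LinearMap.coe_restrictScalars]
  rw [hdI c]
  generalize Coalgebra.comul (R := k) c = t
  induction t using TensorProduct.induction_on with
  | zero => simp
  | tmul c₁ c₂ => simp
  | add s t hs ht => simp only [TensorProduct.tmul_add, map_add, hs, ht]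

theorem e2gen (SM : YDLStruct k H₁ H₂ M) (SN : YDLStruct k H₁ H₂ N)
    (SP : YDLStruct k H₁ H₂ P) (m : M)
    (β₁ α₂ β₂ : H₁ ≃ₐc[k] H₁) (δ₁ γ₂ δ₂ : H₂ ≃ₐc[k] H₂)
    (hlong : ∀ (h : H₁) (p : P), SP.coR (SP.actL (h ⊗ₜ[k] p)) =
      TensorProduct.map (SP.actL ∘ₗ TensorProduct.mk k H₁ P h) LinearMap.id (SP.coR p)) :
    (TensorProduct.assoc k P M N).toLinearMap ∘ₗ
      TensorProduct.map
        (TensorProduct.map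
            ((SP.actL ∘ₗ TensorProduct.map (β₂.symm.toLinearMap ∘ₗ α₂.toLinearMap) LinearMap.id) ∘ₗ
              TensorProduct.map β₁.symm.toLinearMap LinearMap.id)
            (SM.actR ∘ₗ TensorProduct.map LinearMap.id δ₁.symm.toLinearMap) ∘ₗ
          (TensorProduct.tensorTensorTensorComm k H₁ M P H₂).toLinearMap ∘ₗ
          TensorProduct.map SM.coL
            (TensorProduct.map LinearMap.id (γ₂.toLinearMap ∘ₗ δ₂.symm.toLinearMap) ∘ₗ SP.coR))
        LinearMap.id ∘ₗ
      (TensorProduct.assoc k M P N).symm.toLinearMap ∘ₗ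
      TensorProduct.mk k M (P ⊗[k] N) m ∘ₗ
      TensorProduct.map (SP.actL ∘ₗ TensorProduct.map β₂.symm.toLinearMap LinearMap.id)
        (SN.actR ∘ₗ TensorProduct.map LinearMap.id δ₂.symm.toLinearMap) ∘ₗ
      (TensorProduct.tensorTensorTensorComm k H₁ N P H₂).toLinearMap =
    ((TensorProduct.assoc k P M N).toLinearMap ∘ₗ
      TensorProduct.map
        (TensorProduct.map
            ((SP.actL ∘ₗ TensorProduct.map (β₂.symm.toLinearMap ∘ₗ α₂.toLinearMap) LinearMap.id) ∘ₗ
              TensorProduct.map β₁.symm.toLinearMap LinearMap.id)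
            (SM.actR ∘ₗ TensorProduct.map LinearMap.id δ₁.symm.toLinearMap) ∘ₗ
          (TensorProduct.tensorTensorTensorComm k H₁ M P H₂).toLinearMap ∘ₗ
          TensorProduct.map SM.coL
            (TensorProduct.map LinearMap.id (γ₂.toLinearMap ∘ₗ δ₂.symm.toLinearMap)))
        LinearMap.id ∘ₗ
      TensorProduct.map
        (TensorProduct.mk k M (P ⊗[k] H₂) m ∘ₗ
          TensorProduct.map (SP.actL ∘ₗ TensorProduct.map β₂.symm.toLinearMap LinearMap.id)
            LinearMap.id ∘ₗ
          (TensorProduct.assoc k H₁ P H₂).symm.toLinearMap)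
        (SN.actR ∘ₗ TensorProduct.map LinearMap.id δ₂.symm.toLinearMap) ∘ₗ
      (TensorProduct.tensorTensorTensorComm k H₁ N (P ⊗[k] H₂) H₂).toLinearMap) ∘ₗ
      TensorProduct.map LinearMap.id (TensorProduct.map SP.coR LinearMap.id) := by
  ext h9 n9 p9 c9
  simp only [LinearMap.coe_comp, Function.comp_apply, TensorProduct.map_tmul,
    LinearMap.id_coe, id_eq, LinearEquiv.coe_coe, TensorProduct.tensorTensorTensorComm_tmul,
    TensorProduct.assoc_tmul, TensorProduct.assoc_symm_tmul, TensorProduct.mk_apply,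
    LinearMap.compr₂_apply, TensorProduct.AlgebraTensorModule.curry_apply,
    TensorProduct.curry_apply, LinearMap.coe_restrictScalars]
  rw [hlong]
  generalize SP.coR p9 = u
  induction u using TensorProduct.induction_on with
  | zero => simp
  | tmul p0 c0 =>
      simp only [TensorProduct.map_tmul, LinearMap.coe_comp, Function.comp_apply,
        LinearMap.id_coe, id_eq, TensorProduct.mk_apply, LinearEquiv.coe_coe,
        TensorProduct.assoc_symm_tmul, TensorProduct.tensorTensorTensorComm_tmul]
  | add s t hs ht =>
      simp only [map_add, TensorProduct.add_tmul, TensorProduct.tmul_add, hs, ht]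

theorem e3gen (SM : YDLStruct k H₁ H₂ M) (SN : YDLStruct k H₁ H₂ N)
    (SP : YDLStruct k H₁ H₂ P) (m : M)
    (β₁ α₂ β₂ : H₁ ≃ₐc[k] H₁) (δ₁ γ₂ δ₂ : H₂ ≃ₐc[k] H₂)
    (hmul : ∀ (h h' : H₁) (p : P), SP.actL ((h * h') ⊗ₜ[k] p) =
      SP.actL (h ⊗ₜ[k] SP.actL (h' ⊗ₜ[k] p))) :
    TensorProduct.map
        (SP.actL ∘ₗ
          TensorProduct.map (β₂.symm.toLinearMap ∘ₗ α₂.toLinearMap ∘ₗ β₁.symm.toLinearMap ∘ₗ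
            α₂.symm.toLinearMap) LinearMap.id)
        (TensorProduct.map SM.actR SN.actR ∘ₗ
          (TensorProduct.tensorTensorTensorComm k M N H₂ H₂).toLinearMap ∘ₗ
          TensorProduct.map LinearMap.id
            (TensorProduct.map
              (γ₂.toLinearMap ∘ₗ
                (γ₂.symm.toLinearMap ∘ₗ δ₁.symm.toLinearMap ∘ₗ γ₂.toLinearMap ∘ₗ
                  δ₂.symm.toLinearMap))
              ((γ₂.symm.toLinearMap ∘ₗ δ₁.toLinearMap ∘ₗ γ₂.toLinearMap) ∘ₗ
                (γ₂.symm.toLinearMap ∘ₗ δ₁.symm.toLinearMap ∘ₗ γ₂.toLinearMap ∘ₗ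
                  δ₂.symm.toLinearMap)))) ∘ₗ
      (TensorProduct.tensorTensorTensorComm k H₁ (M ⊗[k] N) P (H₂ ⊗[k] H₂)).toLinearMap ∘ₗ
      TensorProduct.map
        ((TensorProduct.map
            (LinearMap.mul' k H₁ ∘ₗ
              TensorProduct.map α₂.toLinearMap
                (α₂.toLinearMap ∘ₗ β₁.toLinearMap ∘ₗ α₂.symm.toLinearMap))
            LinearMap.id ∘ₗ
          (TensorProduct.tensorTensorTensorComm k H₁ M H₁ N).toLinearMap) ∘ₗ
          TensorProduct.mk k (H₁ ⊗[k] M) (H₁ ⊗[k] N) (SM.coL m))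
        (TensorProduct.assoc k P H₂ H₂).toLinearMap =
    (TensorProduct.assoc k P M N).toLinearMap ∘ₗ
      TensorProduct.map
        (TensorProduct.map
            ((SP.actL ∘ₗ TensorProduct.map (β₂.symm.toLinearMap ∘ₗ α₂.toLinearMap) LinearMap.id) ∘ₗ
              TensorProduct.map β₁.symm.toLinearMap LinearMap.id)
            (SM.actR ∘ₗ TensorProduct.map LinearMap.id δ₁.symm.toLinearMap) ∘ₗ
          (TensorProduct.tensorTensorTensorComm k H₁ M P H₂).toLinearMap ∘ₗ
          TensorProduct.map SM.coL
            (TensorProduct.map LinearMap.id (γ₂.toLinearMap ∘ₗ δ₂.symm.toLinearMap)))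
        LinearMap.id ∘ₗ
      TensorProduct.map
        (TensorProduct.mk k M (P ⊗[k] H₂) m ∘ₗ
          TensorProduct.map (SP.actL ∘ₗ TensorProduct.map β₂.symm.toLinearMap LinearMap.id)
            LinearMap.id ∘ₗ
          (TensorProduct.assoc k H₁ P H₂).symm.toLinearMap)
        (SN.actR ∘ₗ TensorProduct.map LinearMap.id δ₂.symm.toLinearMap) ∘ₗ
      (TensorProduct.tensorTensorTensorComm k H₁ N (P ⊗[k] H₂) H₂).toLinearMap := by
  ext h9 n9 p9 c9 c8
  simp only [LinearMap.coe_comp, Function.comp_apply, TensorProduct.map_tmul,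
    LinearMap.id_coe, id_eq, LinearEquiv.coe_coe, TensorProduct.tensorTensorTensorComm_tmul,
    TensorProduct.assoc_tmul, TensorProduct.assoc_symm_tmul, TensorProduct.mk_apply,
    LinearMap.compr₂_apply, TensorProduct.AlgebraTensorModule.curry_apply,
    TensorProduct.curry_apply, LinearMap.coe_restrictScalars]
  generalize SM.coL m = X
  induction X using TensorProduct.induction_on with
  | zero => simp only [TensorProduct.zero_tmul, TensorProduct.tmul_zero, map_zero]
  | tmul h m0 =>
      simp only [TensorProduct.map_tmul, LinearMap.coe_comp, Function.comp_apply,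
        LinearMap.id_coe, id_eq, TensorProduct.mk_apply, LinearEquiv.coe_coe,
        TensorProduct.assoc_symm_tmul, TensorProduct.tensorTensorTensorComm_tmul,
        LinearMap.mul'_apply, tlm]
      rw [map_mul, map_mul, map_mul, map_mul]
      simp only [bsymm, bapp]
      rw [hmul]
      simp
  | add s t hs ht =>
      simp only [map_add, TensorProduct.add_tmul, TensorProduct.tmul_add, hs, ht]


end helpers

/-- the hexagon-type identity
`c_{M⊗N,P} = (c_{M,ᴺP} ⊗ id_N) ∘ (id_M ⊗ c_{N,P})` (up to the associativity
isomorphisms of the tensor product of vector spaces). -/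
theorem braid_hexagon {k H₁ H₂ M N P : Type*} [Field k] [Ring H₁] [Ring H₂]
    [HopfAlgebra k H₁] [HopfAlgebra k H₂]
    [AddCommGroup M] [Module k M] [AddCommGroup N] [Module k N]
    [AddCommGroup P] [Module k P]
    (α₁ β₁ α₂ β₂ α₃ β₃ : H₁ ≃ₐc[k] H₁) (γ₁ δ₁ γ₂ δ₂ γ₃ δ₃ : H₂ ≃ₐc[k] H₂)
    (SM : YDLStruct k H₁ H₂ M) (SN : YDLStruct k H₁ H₂ N) (SP : YDLStruct k H₁ H₂ P)
    (hM : IsYDL α₁.toLinearMap β₁.toLinearMap γ₁.toLinearMap δ₁.toLinearMap SM)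
    (hN : IsYDL α₂.toLinearMap β₂.toLinearMap γ₂.toLinearMap δ₂.toLinearMap SN)
    (hP : IsYDL α₃.toLinearMap β₃.toLinearMap γ₃.toLinearMap δ₃.toLinearMap SP) :
    -- `c_{M⊗N,P}`, computed from the parameters
    -- `(α₂α₁, α₂β₁α₂⁻¹β₂, γ₁γ₂, δ₂γ₂⁻¹δ₁γ₂)` of `M ⊗ N`
    braid
        (β₂.symm.toLinearMap ∘ₗ α₂.toLinearMap ∘ₗ β₁.symm.toLinearMap ∘ₗ
          α₂.symm.toLinearMap)
        (γ₂.symm.toLinearMap ∘ₗ δ₁.symm.toLinearMap ∘ₗ γ₂.toLinearMap ∘ₗ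
          δ₂.symm.toLinearMap)
        (tensorYDL (α₂.toLinearMap)
          (α₂.toLinearMap ∘ₗ β₁.toLinearMap ∘ₗ α₂.symm.toLinearMap)
          (γ₂.toLinearMap)
          (γ₂.symm.toLinearMap ∘ₗ δ₁.toLinearMap ∘ₗ γ₂.toLinearMap) SM SN) SP =
      (TensorProduct.assoc k P M N).toLinearMap ∘ₗ
        TensorProduct.map
          -- `c_{M,ᴺP}`, with `ᴺP` the twist of `P` by the parameters of `N`
          (braid β₁.symm.toLinearMap δ₁.symm.toLinearMap SM
            (twistYDL (β₂.symm.toLinearMap ∘ₗ α₂.toLinearMap)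
              (α₂.symm.toLinearMap ∘ₗ α₃.toLinearMap ∘ₗ β₂.toLinearMap ∘ₗ
                α₃.symm.toLinearMap)
              (γ₃.symm.toLinearMap ∘ₗ δ₂.toLinearMap ∘ₗ γ₃.toLinearMap ∘ₗ
                γ₂.symm.toLinearMap)
              (γ₂.toLinearMap ∘ₗ δ₂.symm.toLinearMap) SP))
          LinearMap.id ∘ₗ
        (TensorProduct.assoc k M P N).symm.toLinearMap ∘ₗ
        TensorProduct.map LinearMap.id
          (braid β₂.symm.toLinearMap δ₂.symm.toLinearMap SN SP) ∘ₗ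
        (TensorProduct.assoc k M N P).toLinearMap := by
  apply TensorProduct.ext
  apply TensorProduct.ext
  ext m n p
  simp only [braid, tensorYDL, twistYDL, LinearMap.coe_comp, Function.comp_apply,
    TensorProduct.map_tmul, LinearMap.id_coe, id_eq, LinearEquiv.coe_coe,
    TensorProduct.assoc_tmul, TensorProduct.assoc_symm_tmul, LinearMap.compr₂_apply,
    TensorProduct.mk_apply, TensorProduct.AlgebraTensorModule.curry_apply,
    TensorProduct.curry_apply, LinearMap.coe_restrictScalars, LinearMap.compr₂ₛₗ_apply]
  have hdI : ∀ c : H₂, Coalgebra.comul (R := k)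
      ((γ₂.symm.toLinearMap ∘ₗ δ₁.symm.toLinearMap ∘ₗ γ₂.toLinearMap ∘ₗ
        δ₂.symm.toLinearMap) c) =
      TensorProduct.map
        (γ₂.symm.toLinearMap ∘ₗ δ₁.symm.toLinearMap ∘ₗ γ₂.toLinearMap ∘ₗ δ₂.symm.toLinearMap)
        (γ₂.symm.toLinearMap ∘ₗ δ₁.symm.toLinearMap ∘ₗ γ₂.toLinearMap ∘ₗ δ₂.symm.toLinearMap)
        (Coalgebra.comul (R := k) c) := fun c => by
    simp only [LinearMap.coe_comp, Function.comp_apply, comul_tlm, TensorProduct.map_comp]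
  have h1 := LinearMap.congr_fun (e1gen
      (SP.actL ∘ₗ TensorProduct.map (β₂.symm.toLinearMap ∘ₗ α₂.toLinearMap ∘ₗ
        β₁.symm.toLinearMap ∘ₗ α₂.symm.toLinearMap) LinearMap.id)
      SM.actR SN.actR γ₂.toLinearMap
      (γ₂.symm.toLinearMap ∘ₗ δ₁.toLinearMap ∘ₗ γ₂.toLinearMap)
      (γ₂.symm.toLinearMap ∘ₗ δ₁.symm.toLinearMap ∘ₗ γ₂.toLinearMap ∘ₗ δ₂.symm.toLinearMap)
      hdI)
    ((TensorProduct.map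
        (LinearMap.mul' k H₁ ∘ₗ TensorProduct.map α₂.toLinearMap
          (α₂.toLinearMap ∘ₗ β₁.toLinearMap ∘ₗ α₂.symm.toLinearMap)) LinearMap.id)
      ((TensorProduct.tensorTensorTensorComm k H₁ M H₁ N) (SM.coL m ⊗ₜ[k] SN.coL n)) ⊗ₜ[k]
      SP.coR p)
  have h3 := LinearMap.congr_fun (e3gen SM SN SP m β₁ α₂ β₂ δ₁ γ₂ δ₂ hP.actL_mul)
    (SN.coL n ⊗ₜ[k] (TensorProduct.map SP.coR LinearMap.id (SP.coR p)))
  have h2 := LinearMap.congr_fun (e2gen SM SN SP m β₁ α₂ β₂ δ₁ γ₂ δ₂ hP.longL)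
    (SN.coL n ⊗ₜ[k] SP.coR p)
  simp only [LinearMap.coe_comp, Function.comp_apply, TensorProduct.map_tmul,
    LinearMap.id_coe, id_eq, LinearEquiv.coe_coe, TensorProduct.mk_apply] at h1 h2 h3
  rw [hP.coR_coassoc] at h1
  rw [h1, h3, ← h2]
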